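/- arXiv:2004.05813 — 2 statements merged into one kernel-verified Lean document; each statement's English description precedes it below -/
import Mathlib

section
/- Let μ = Σ_{l=1}^{k₀} w_l N(y_l, I_d) be a mixture of k₀ ≤ k spherical Gaussians on ℝ^d whose weights satisfy w_l ≥ c/k for a constant c ∈ (0,1), and set η = 1/10. If n ≥ 1 + (k/c)·log⌈300k/η⌉·⌈log⌈(300k·log⌈300k/η⌉)/η⌉⌉ and x_1,…,x_n are i.i.d. samples from μ, then with probability at least 1 − η/100 every center is covered: {y_1,…,y_{k₀}} ⊆ ⋃_{l∈[n]} B₂(x_l, 2√d). -/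
open MeasureTheory Real ProbabilityTheory
open scoped ENNReal

/-- The spherical Gaussian measure `N(y, I_d)` on `ℝ^d` with mean `y` and identity covariance,
given by its density `γ(x - y) = (2π)^(-d/2) exp(-‖x-y‖²/2)` w.r.t. Lebesgue measure. -/
noncomputable def sphericalGaussian (d : ℕ) (y : EuclideanSpace ℝ (Fin d)) :
    Measure (EuclideanSpace ℝ (Fin d)) :=
  volume.withDensity fun x =>
    ENNReal.ofReal ((2 * π) ^ (-(d : ℝ) / 2) * Real.exp (-‖x - y‖ ^ 2 / 2))

section AuxiliaryLemmas

open Filter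

set_option maxHeartbeats 1000000


lemma gauss_total (d : ℕ) : ∫ v : EuclideanSpace ℝ (Fin d), rexp (-(1/2) * ‖v‖^2) = (2*π)^((d:ℝ)/2) := by
  rw [GaussianFourier.integral_rexp_neg_mul_sq_norm (by norm_num : (0:ℝ) < 1/2),
    finrank_euclideanSpace_fin, show (π/(1/2):ℝ) = 2*π by ring]

lemma sq_exp_integrable : MeasureTheory.Integrable (fun x : ℝ => x^2 * rexp (-(1/2) * x^2)) := by
  have := integrable_rpow_mul_exp_neg_mul_sq (b := 1/2) (by norm_num) (s := 2) (by norm_num)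
  simpa [Real.rpow_two] using this

lemma exp_integrable : MeasureTheory.Integrable (fun x : ℝ => rexp (-(1/2) * x^2)) :=
  integrable_exp_neg_mul_sq (by norm_num)

lemma tendsto_aux : Tendsto (fun x : ℝ => -x * rexp (-(1/2) * x^2)) (cocompact ℝ) (nhds 0) := by
  have h := tendsto_rpow_abs_mul_exp_neg_mul_sq_cocompact (by norm_num : (0:ℝ) < 1/2) 1
  rw [tendsto_zero_iff_norm_tendsto_zero]
  refine squeeze_zero (fun x => norm_nonneg _) (fun x => ?_) h
  rw [Real.norm_eq_abs, abs_mul, abs_neg, Real.rpow_one, abs_of_nonneg (Real.exp_pos _).le]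

lemma oneD_moment : ∫ x : ℝ, x^2 * rexp (-(1/2) * x^2) = Real.sqrt (2*π) := by
  have hderiv : ∀ x : ℝ, HasDerivAt (fun x : ℝ => -x * rexp (-(1/2) * x^2))
      (x^2 * rexp (-(1/2) * x^2) - rexp (-(1/2) * x^2)) x := by
    intro x
    have h1 : HasDerivAt (fun x : ℝ => -(1/2) * x^2) (-(1/2) * (2*x)) x := by
      simpa using (((hasDerivAt_pow 2 x)).const_mul (-(1/2):ℝ))
    have h3 : HasDerivAt (fun x : ℝ => (-x)) (-1) x := by simpa using hasDerivAt_neg' (x := x)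
    have : HasDerivAt (fun x : ℝ => -x * rexp (-(1/2) * x^2))
        (-1 * rexp (-(1/2) * x^2) + -x * (rexp (-(1/2) * x^2) * (-(1/2) * (2 * x)))) x :=
      h3.fun_mul h1.exp
    convert this using 1
    ring
  have hint : MeasureTheory.Integrable (fun x : ℝ =>
      x^2 * rexp (-(1/2) * x^2) - rexp (-(1/2) * x^2)) := sq_exp_integrable.sub exp_integrable
  have hco := tendsto_aux
  rw [cocompact_eq_atBot_atTop, tendsto_sup] at hco
  have := MeasureTheory.integral_of_hasDerivAt_of_tendsto hderiv hint hco.1 hco.2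
  simp only [sub_zero] at this
  rw [MeasureTheory.integral_sub sq_exp_integrable exp_integrable] at this
  have h5 : ∫ x : ℝ, rexp (-(1/2) * x^2) = Real.sqrt (2*π) := by
    rw [integral_gaussian]
    rw [show π / (1/2) = 2 * π by ring]
  linarith [this, h5]



noncomputable def gfun (d : ℕ) (i j : Fin d) : ℝ → ℝ :=
  fun t => if j = i then t^2 * rexp (-(1/2) * t^2) else rexp (-(1/2) * t^2)

lemma gfun_int (d : ℕ) (i j : Fin d) : MeasureTheory.Integrable (gfun d i j) := by
  unfold gfun; split <;> [exact sq_exp_integrable; exact exp_integrable]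

lemma gfun_integral (d : ℕ) (i j : Fin d) : ∫ t : ℝ, gfun d i j t = Real.sqrt (2*π) := by
  unfold gfun; split
  · exact oneD_moment
  · rw [integral_gaussian, show π / (1/2) = 2*π by ring]

lemma gfun_prod (d : ℕ) (i : Fin d) (x : Fin d → ℝ) :
    (x i)^2 * ∏ j, rexp (-(1/2) * (x j)^2) = ∏ j, gfun d i j (x j) := by
  rw [← Finset.mul_prod_erase Finset.univ (fun j => rexp (-(1/2) * (x j)^2)) (Finset.mem_univ i),
      ← Finset.mul_prod_erase Finset.univ (fun j => gfun d i j (x j)) (Finset.mem_univ i)]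
  rw [show gfun d i i (x i) = (x i)^2 * rexp (-(1/2) * (x i)^2) by simp [gfun]]
  rw [Finset.prod_congr rfl (fun j hj => show gfun d i j (x j) = rexp (-(1/2)*(x j)^2) by
    simp [gfun, (Finset.mem_erase.mp hj).1])]
  ring

lemma sqrt_pow (d : ℕ) : (Real.sqrt (2*π))^d = (2*π)^((d:ℝ)/2) := by
  rw [Real.sqrt_eq_rpow, ← Real.rpow_natCast ((2*π) ^ (1/2:ℝ)) d, ← Real.rpow_mul (by positivity)]
  rw [one_div, inv_mul_eq_div]

lemma gauss_moment (d : ℕ) :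
    ∫ v : EuclideanSpace ℝ (Fin d), ‖v‖^2 * rexp (-(1/2) * ‖v‖^2)
      = d * (2*π)^((d:ℝ)/2) := by
  have e : MeasurePreserving (MeasurableEquiv.toLp 2 (Fin d → ℝ)) := (EuclideanSpace.volume_preserving_symm_measurableEquiv_toLp (Fin d)).symm
  rw [← e.integral_comp (MeasurableEquiv.measurableEmbedding _)]
  have hnorm : ∀ x : Fin d → ℝ,
      ‖(MeasurableEquiv.toLp 2 (Fin d → ℝ)) x‖^2 = ∑ i, (x i)^2 := by
    intro x
    rw [EuclideanSpace.norm_eq, Real.sq_sqrt (Finset.sum_nonneg fun i _ => sq_nonneg _)]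
    simp [MeasurableEquiv.toLp_apply, Real.norm_eq_abs, sq_abs]
  calc ∫ x : Fin d → ℝ, ‖(MeasurableEquiv.toLp 2 (Fin d → ℝ)) x‖^2
        * rexp (-(1/2) * ‖(MeasurableEquiv.toLp 2 (Fin d → ℝ)) x‖^2)
      = ∫ x : Fin d → ℝ, ∑ i, ∏ j, gfun d i j (x j) := by
        congr 1 with x
        rw [hnorm, Finset.sum_mul]
        refine Finset.sum_congr rfl (fun i _ => ?_)
        rw [← gfun_prod]
        rw [← Real.exp_sum]
        congr 1
        rw [Finset.mul_sum]
    _ = ∑ i, ∫ x : Fin d → ℝ, ∏ j, gfun d i j (x j) :=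
        integral_finset_sum _ (fun i _ => Integrable.fintype_prod (fun j => gfun_int d i j))
    _ = d * (2*π)^((d:ℝ)/2) := by
        rw [Finset.sum_congr rfl (fun i _ => MeasureTheory.integral_fintype_prod_volume_eq_prod
          (ι := Fin d) (gfun d i))]
        simp only [gfun_integral, Finset.prod_const, Finset.card_univ, Fintype.card_fin]
        rw [Finset.sum_const, Finset.card_univ, Fintype.card_fin, nsmul_eq_mul, sqrt_pow]



lemma enorm_aux (d : ℕ) (x : Fin d → ℝ) :
    ‖(MeasurableEquiv.toLp 2 (Fin d → ℝ)) x‖^2 = ∑ i, (x i)^2 := by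
  rw [EuclideanSpace.norm_eq, Real.sq_sqrt (Finset.sum_nonneg fun i _ => sq_nonneg _)]
  simp [MeasurableEquiv.toLp_apply, Real.norm_eq_abs, sq_abs]

lemma comp_eq (d : ℕ) (x : Fin d → ℝ) :
    ‖(MeasurableEquiv.toLp 2 (Fin d → ℝ)) x‖^2
      * rexp (-(1/2) * ‖(MeasurableEquiv.toLp 2 (Fin d → ℝ)) x‖^2)
    = ∑ i, ∏ j, gfun d i j (x j) := by
  rw [enorm_aux, Finset.sum_mul]
  refine Finset.sum_congr rfl (fun i _ => ?_)
  rw [← gfun_prod, ← Real.exp_sum]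
  congr 1
  rw [Finset.mul_sum]

lemma moment_integrable (d : ℕ) :
    Integrable (fun v : EuclideanSpace ℝ (Fin d) => ‖v‖^2 * rexp (-(1/2) * ‖v‖^2)) := by
  have e : MeasurePreserving (MeasurableEquiv.toLp 2 (Fin d → ℝ)) := (EuclideanSpace.volume_preserving_symm_measurableEquiv_toLp (Fin d)).symm
  rw [← e.integrable_comp_emb (MeasurableEquiv.measurableEmbedding _)]
  have : ((fun v : EuclideanSpace ℝ (Fin d) => ‖v‖^2 * rexp (-(1/2) * ‖v‖^2)) ∘
      (MeasurableEquiv.toLp 2 (Fin d → ℝ)))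
      = fun x : Fin d → ℝ => ∑ i, ∏ j, gfun d i j (x j) := by
    funext x; exact comp_eq d x
  rw [this]
  exact integrable_finset_sum _ (fun i _ => Integrable.fintype_prod (fun j => gfun_int d i j))





lemma exp_norm_integrable (d : ℕ) :
    Integrable (fun v : EuclideanSpace ℝ (Fin d) => rexp (-(1/2) * ‖v‖^2)) := by
  have h := (GaussianFourier.integrable_cexp_neg_mul_sq_norm_add
    (V := EuclideanSpace ℝ (Fin d)) (b := (1/2 : ℂ)) (by norm_num) 0 0).norm
  refine h.congr (Filter.Eventually.of_forall fun v => ?_)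
  simp only [Complex.norm_exp, mul_zero, zero_mul, add_zero,
    Complex.add_re, Complex.mul_re, Complex.zero_re]
  norm_num [← Complex.ofReal_pow]

lemma cexp_meas_aux (d : ℕ) (y : EuclideanSpace ℝ (Fin d)) :
    Measurable (fun x : EuclideanSpace ℝ (Fin d) =>
      ENNReal.ofReal ((2 * π) ^ (-(d : ℝ) / 2) * Real.exp (-‖x - y‖ ^ 2 / 2))) := by
  fun_prop

-- key: C * (2π)^(d/2) = 1
lemma const_cancel (d : ℕ) : (2 * π) ^ (-(d:ℝ) / 2) * (2*π)^((d:ℝ)/2) = 1 := by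
  rw [← Real.rpow_add (by positivity), neg_div, neg_add_cancel, Real.rpow_zero]

lemma lint_shift (d : ℕ) (y : EuclideanSpace ℝ (Fin d)) (g : ℝ → ℝ≥0∞) :
    ∫⁻ x : EuclideanSpace ℝ (Fin d), g (‖x - y‖) = ∫⁻ x : EuclideanSpace ℝ (Fin d), g ‖x‖ :=
  lintegral_sub_right_eq_self (fun x => g ‖x‖) y

lemma sphericalGaussian_univ (d : ℕ) (y : EuclideanSpace ℝ (Fin d)) :
    sphericalGaussian d y Set.univ = 1 := by
  rw [sphericalGaussian, withDensity_apply _ MeasurableSet.univ, setLIntegral_univ]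
  have := lint_shift d y (fun t => ENNReal.ofReal ((2 * π) ^ (-(d : ℝ) / 2) * Real.exp (-t ^ 2 / 2)))
  rw [this]
  rw [← MeasureTheory.ofReal_integral_eq_lintegral_ofReal
    (((exp_norm_integrable d).const_mul ((2 * π) ^ (-(d : ℝ) / 2))).congr
      (Filter.Eventually.of_forall fun v => by
        show (2*π)^(-(d:ℝ)/2) * rexp (-(1/2)*‖v‖^2) = (2*π)^(-(d:ℝ)/2) * rexp (-‖v‖^2/2)
        congr 2
        ring))
    (Filter.Eventually.of_forall fun v => by positivity)]
  rw [MeasureTheory.integral_const_mul]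
  have : ∫ v : EuclideanSpace ℝ (Fin d), rexp (-‖v‖^2/2) = (2*π)^((d:ℝ)/2) := by
    rw [← gauss_total d]; congr 1 with v; rw [show (-(1/2) * ‖v‖^2 : ℝ) = -‖v‖^2/2 by ring]
  rw [this, const_cancel, ENNReal.ofReal_one]





lemma sphericalGaussian_tail (d : ℕ) (hd : 1 ≤ d) (y : EuclideanSpace ℝ (Fin d)) :
    sphericalGaussian d y ((Metric.closedBall y (2 * Real.sqrt d))ᶜ) ≤ ENNReal.ofReal (1/4) := by
  have hd0 : (0:ℝ) < d := by exact_mod_cast Nat.lt_of_lt_of_le Nat.zero_lt_one hd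
  set C : ℝ := (2 * π) ^ (-(d:ℝ)/2) with hC
  have hCpos : 0 < C := by positivity
  rw [sphericalGaussian, withDensity_apply _ measurableSet_closedBall.compl]
  have step1 : ∫⁻ x in (Metric.closedBall y (2 * Real.sqrt d))ᶜ,
      ENNReal.ofReal (C * rexp (-‖x - y‖ ^ 2 / 2))
      ≤ ∫⁻ x : EuclideanSpace ℝ (Fin d),
      ENNReal.ofReal (‖x - y‖^2 / (4*d) * (C * rexp (-‖x - y‖ ^ 2 / 2))) := by
    refine le_trans (setLIntegral_mono (by fun_prop) (fun x hx => ?_))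
      (setLIntegral_le_lintegral _ _)
    have hdist : 2 * Real.sqrt d < dist x y := by
      by_contra h
      exact hx (Metric.mem_closedBall.mpr (not_lt.mp h))
    rw [dist_eq_norm] at hdist
    have h4d : (4:ℝ) * d ≤ ‖x - y‖^2 := by
      have h1 : (2 * Real.sqrt d)^2 ≤ ‖x - y‖^2 := by
        apply sq_le_sq' <;> nlinarith [Real.sqrt_nonneg (d:ℝ), norm_nonneg (x - y)]
      calc (4:ℝ) * d = (2 * Real.sqrt d)^2 := by
            rw [mul_pow, Real.sq_sqrt hd0.le]; ring
        _ ≤ _ := h1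
    apply ENNReal.ofReal_le_ofReal
    have h1 : (1:ℝ) ≤ ‖x - y‖^2 / (4*d) := (one_le_div (by positivity)).mpr h4d
    exact le_mul_of_one_le_left (by positivity) h1
  refine le_trans step1 ?_
  have := lint_shift d y (fun t => ENNReal.ofReal (t^2 / (4*d) * (C * rexp (-t ^ 2 / 2))))
  rw [this]
  have hint : Integrable (fun x : EuclideanSpace ℝ (Fin d) =>
      ‖x‖^2 / (4*d) * (C * rexp (-‖x‖ ^ 2 / 2))) := by
    refine ((moment_integrable d).const_mul (C / (4*d))).congr
      (Filter.Eventually.of_forall fun v => ?_)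
    show C / (4*(d:ℝ)) * (‖v‖^2 * rexp (-(1/2) * ‖v‖^2)) = _
    rw [show (-(1/2) * ‖v‖^2 : ℝ) = -‖v‖^2/2 by ring]
    ring
  rw [← MeasureTheory.ofReal_integral_eq_lintegral_ofReal hint
    (Filter.Eventually.of_forall fun v => by positivity)]
  apply ENNReal.ofReal_le_ofReal
  have : ∫ x : EuclideanSpace ℝ (Fin d), ‖x‖^2 / (4*d) * (C * rexp (-‖x‖ ^ 2 / 2))
      = C / (4*d) * ∫ x : EuclideanSpace ℝ (Fin d), ‖x‖^2 * rexp (-(1/2) * ‖x‖^2) := by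
    rw [← MeasureTheory.integral_const_mul]
    congr 1 with v
    rw [show (-(1/2) * ‖v‖^2 : ℝ) = -‖v‖^2/2 by ring]
    ring
  rw [this, gauss_moment d]
  rw [show C / (4*(d:ℝ)) * ((d:ℝ) * (2*π)^((d:ℝ)/2)) = (C * (2*π)^((d:ℝ)/2)) * ((d:ℝ)/(4*d)) by ring,
    const_cancel d, one_mul]
  rw [show (4:ℝ)*d = d*4 by ring, ← div_div, div_self hd0.ne']



-- numeric real lemma
lemma real_numeric (k k₀ n : ℕ) (hk : 1 ≤ k) (hk₀k : k₀ ≤ k)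
    (c : ℝ) (hc : 0 < c) (hc1 : c < 1)
    (hn : (n : ℝ) ≥ 1 + ((k : ℝ) / c) *
        Real.log (⌈300 * (k : ℝ) / (1 / 10)⌉₊ : ℝ) *
        (⌈Real.log
            ((⌈(300 * (k : ℝ) * Real.log (⌈300 * (k : ℝ) / (1 / 10)⌉₊ : ℝ)) / (1 / 10)⌉₊ : ℝ))⌉₊ :
          ℝ)) :
    (k₀ : ℝ) * (1 - c / k * (3/4))^n ≤ 1/1000 := by
  have hk1 : (1:ℝ) ≤ k := by exact_mod_cast hk
  have hkpos : (0:ℝ) < k := by linarith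
  set t : ℝ := c / k * (3/4) with ht
  have htpos : 0 < t := by positivity
  have htle : t ≤ 3/4 := by
    have : c / k ≤ 1 := by
      rw [div_le_one hkpos]; linarith
    nlinarith
  set L : ℝ := Real.log (⌈300 * (k : ℝ) / (1 / 10)⌉₊ : ℝ) with hL
  set M : ℕ := ⌈Real.log
      ((⌈(300 * (k : ℝ) * Real.log (⌈300 * (k : ℝ) / (1 / 10)⌉₊ : ℝ)) / (1 / 10)⌉₊ : ℝ))⌉₊ with hM
  -- basic: A := ceil(3000k) ≥ 3000 k
  have hA : (3000:ℝ) * k ≤ (⌈300 * (k : ℝ) / (1 / 10)⌉₊ : ℝ) := by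
    have := Nat.le_ceil (300 * (k : ℝ) / (1 / 10))
    linarith [this]
  have hexp2 : Real.exp 2 < 3000 := by
    have h := Real.exp_one_lt_d9
    calc Real.exp 2 = Real.exp 1 * Real.exp 1 := by
          rw [← Real.exp_add]; norm_num
      _ < 2.7182818286 * 2.7182818286 := by nlinarith [Real.exp_pos 1]
      _ < 3000 := by norm_num
  have hL2 : 2 ≤ L := by
    rw [hL, ← Real.exp_le_exp, Real.exp_log (by nlinarith)]
    nlinarith
  have hLlog : Real.log (3000 * k) ≤ L := by
    exact Real.log_le_log (by positivity) hA
  have hM2 : (2:ℝ) ≤ (M : ℝ) := by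
    have h1 := Nat.le_ceil (Real.log
      ((⌈(300 * (k : ℝ) * Real.log (⌈300 * (k : ℝ) / (1 / 10)⌉₊ : ℝ)) / (1 / 10)⌉₊ : ℝ)))
    have h2 := Nat.le_ceil ((300 * (k : ℝ) * L) / (1 / 10))
    have h3 : (3000:ℝ) ≤ ((⌈(300 * (k : ℝ) * L) / (1 / 10)⌉₊ : ℕ) : ℝ) := by
      have : (3000:ℝ) ≤ (300 * (k : ℝ) * L) / (1 / 10) := by nlinarith
      linarith
    have h4 : (2:ℝ) ≤ Real.log ((⌈(300 * (k : ℝ) * L) / (1 / 10)⌉₊ : ℕ) : ℝ) := by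
      rw [← Real.exp_le_exp, Real.exp_log (by linarith)]
      linarith
    rw [hM]
    exact le_trans h4 h1
  have hMnonneg : (0:ℝ) ≤ (M:ℝ) := by linarith
  have hnge : (n : ℝ) ≥ ((k:ℝ)/c) * L * M := by linarith [hn]
  clear_value L M
  clear hn hA hM hL
  -- t * n ≥ log (1000 k)
  have htn : Real.log (1000 * k) ≤ t * n := by
    have hck : c / (k:ℝ) * ((k:ℝ) / c) = 1 := by
      field_simp
    have h5 : t * (((k:ℝ)/c) * L * M) = (3/4) * L * M := by
      calc t * (((k:ℝ)/c) * L * M) = (c/(k:ℝ)*((k:ℝ)/c)) * ((3/4)*L*M) := by rw [ht]; ring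
        _ = (3/4)*L*M := by rw [hck, one_mul]
    have h6 : t * (((k:ℝ)/c) * L * M) ≤ t * n := by
      apply mul_le_mul_of_nonneg_left hnge htpos.le
    have h7 : (3/4) * L * (M:ℝ) ≥ (3/2) * L := by nlinarith
    have h8 : Real.log (1000 * k) ≤ Real.log (3000 * k) :=
      Real.log_le_log (by positivity) (by nlinarith)
    rw [h5] at h6
    linarith
  -- final chain
  have hpow : (1 - t)^n ≤ Real.exp (-(t * n)) := by
    have h1 : 1 - t ≤ Real.exp (-t) := by
      linarith [Real.add_one_le_exp (-t)]
    calc (1 - t)^n ≤ (Real.exp (-t))^n :=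
          pow_le_pow_left₀ (by linarith) h1 n
      _ = Real.exp (-(t * n)) := by
          rw [← Real.exp_nat_mul]; ring_nf
  have hexp : Real.exp (-(t * n)) ≤ 1 / (1000 * k) := by
    rw [show (1:ℝ) / (1000 * k) = Real.exp (-(Real.log (1000 * k))) by
      rw [Real.exp_neg, Real.exp_log (by positivity), one_div]]
    exact Real.exp_le_exp.mpr (by linarith)
  calc (k₀ : ℝ) * (1 - t)^n ≤ (k:ℝ) * (1 / (1000 * k)) := by
        apply mul_le_mul (by exact_mod_cast hk₀k) (le_trans hpow hexp)
          (pow_nonneg (by linarith) n) (by positivity)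
    _ = 1/1000 := by field_simp


end AuxiliaryLemmas

/-- For a mixture `μ = Σ_{l=1}^{k₀} w_l N(y_l, I_d)` of `k₀ ≤ k` spherical
Gaussians with `w_l ≥ c/k`, `c ∈ (0,1)`, `η = 1/10`, if
`n ≥ 1 + (k/c)·log⌈300k/η⌉·⌈log⌈(300k·log⌈300k/η⌉)/η⌉⌉` and `x₁,…,xₙ` are i.i.d. from `μ`,
then with probability ≥ `1 − η/100` every center lies in `⋃_l B₂(x_l, 2√d)`. -/
theorem centers_covered_by_sample_balls
    {Ω : Type*} [MeasurableSpace Ω] (P : Measure Ω) [IsProbabilityMeasure P]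
    (d k k₀ n : ℕ) (hd : 1 ≤ d) (hk : 1 ≤ k) (hk₀ : 1 ≤ k₀) (hk₀k : k₀ ≤ k)
    (c : ℝ) (hc : 0 < c) (hc1 : c < 1)
    (y : Fin k₀ → EuclideanSpace ℝ (Fin d))
    (w : Fin k₀ → ℝ) (hw : ∀ l, c / k ≤ w l) (hw1 : ∑ l, w l = 1)
    (X : Fin n → Ω → EuclideanSpace ℝ (Fin d))
    (hmeas : ∀ i, Measurable (X i))
    (hiid : iIndepFun X P)
    (hlaw : ∀ i, Measure.map (X i) P =
      ∑ l : Fin k₀, ENNReal.ofReal (w l) • sphericalGaussian d (y l))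
    (hn : (n : ℝ) ≥ 1 + ((k : ℝ) / c) *
        Real.log (⌈300 * (k : ℝ) / (1 / 10)⌉₊ : ℝ) *
        (⌈Real.log
            ((⌈(300 * (k : ℝ) * Real.log (⌈300 * (k : ℝ) / (1 / 10)⌉₊ : ℝ)) / (1 / 10)⌉₊ : ℝ))⌉₊ :
          ℝ)) :
    P {ω | ∀ j : Fin k₀, ∃ l : Fin n, dist (y j) (X l ω) ≤ 2 * Real.sqrt d} ≥
      1 - (1 / 10 : ℝ≥0∞) / 100 := by
  classical
  set r : ℝ := 2 * Real.sqrt d with hr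
  set S : Fin k₀ → Set (EuclideanSpace ℝ (Fin d)) := fun j => Metric.closedBall (y j) r with hS
  have hSmeas : ∀ j, MeasurableSet (S j) := fun j => measurableSet_closedBall
  set G : Set Ω := {ω | ∀ j : Fin k₀, ∃ l : Fin n, dist (y j) (X l ω) ≤ r} with hG
  have hGeq : G = ⋂ j, ⋃ l, X l ⁻¹' (S j) := by
    ext ω
    simp only [hG, Set.mem_setOf_eq, Set.mem_iInter, Set.mem_iUnion, Set.mem_preimage, hS,
      Metric.mem_closedBall']
  have hGmeas : MeasurableSet G := by
    rw [hGeq]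
    exact MeasurableSet.iInter fun j => MeasurableSet.iUnion fun l => (hmeas l) (hSmeas j)
  have hGc : Gᶜ = ⋃ j, ⋂ l, X l ⁻¹' (S j)ᶜ := by
    rw [hGeq]
    simp [Set.compl_iInter, Set.compl_iUnion, Set.preimage_compl]
  -- probability that one sample hits S j
  have hmass : ∀ j (l : Fin n), ENNReal.ofReal (c / k * (3/4)) ≤ P (X l ⁻¹' (S j)) := by
    intro j l
    have hmap : P (X l ⁻¹' (S j)) = Measure.map (X l) P (S j) :=
      (Measure.map_apply (hmeas l) (hSmeas j)).symm
    rw [hmap, hlaw l]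
    have hterm : ENNReal.ofReal (w j) * sphericalGaussian d (y j) (S j)
        ≤ (∑ l' : Fin k₀, ENNReal.ofReal (w l') • sphericalGaussian d (y l')) (S j) := by
      rw [Measure.coe_finset_sum]
      simp only [Finset.sum_apply, Measure.smul_apply, smul_eq_mul]
      exact Finset.single_le_sum
        (f := fun l' => ENNReal.ofReal (w l') * sphericalGaussian d (y l') (S j))
        (fun l' _ => zero_le) (Finset.mem_univ j)
    refine le_trans ?_ hterm
    have htail : sphericalGaussian d (y j) (S j) ≥ ENNReal.ofReal (3/4) := by
      have h1 := sphericalGaussian_tail d hd (y j)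
      have h2 : sphericalGaussian d (y j) (S j) + sphericalGaussian d (y j) ((S j)ᶜ) = 1 := by
        rw [measure_add_measure_compl (hSmeas j), sphericalGaussian_univ]
      have h3 : sphericalGaussian d (y j) ((S j)ᶜ) ≤ ENNReal.ofReal (1/4) := h1
      have hfin : sphericalGaussian d (y j) ((S j)ᶜ) ≠ ⊤ :=
        ne_top_of_le_ne_top ENNReal.ofReal_ne_top h3
      have h4 : sphericalGaussian d (y j) (S j) = 1 - sphericalGaussian d (y j) ((S j)ᶜ) :=
        ENNReal.eq_sub_of_add_eq hfin h2
      rw [h4]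
      have h5 : (1:ℝ≥0∞) - ENNReal.ofReal (1/4) = ENNReal.ofReal (3/4) := by
        rw [← ENNReal.ofReal_one, ← ENNReal.ofReal_sub _ (by norm_num)]
        norm_num
      calc ENNReal.ofReal (3/4) = 1 - ENNReal.ofReal (1/4) := h5.symm
        _ ≤ 1 - sphericalGaussian d (y j) ((S j)ᶜ) := tsub_le_tsub_left h3 1
    calc ENNReal.ofReal (c / k * (3/4))
        = ENNReal.ofReal (c / k) * ENNReal.ofReal (3/4) := by
          rw [ENNReal.ofReal_mul (by positivity)]
      _ ≤ ENNReal.ofReal (w j) * sphericalGaussian d (y j) (S j) :=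
          mul_le_mul' (ENNReal.ofReal_le_ofReal (hw j)) htail
  -- product bound for bad event
  set q : ℝ≥0∞ := ENNReal.ofReal (c / k * (3/4)) with hq
  have hq1 : q ≤ 1 := by
    rw [hq]
    refine ENNReal.ofReal_le_one.mpr ?_
    have hk1 : (1:ℝ) ≤ k := by exact_mod_cast hk
    have : c / k ≤ 1 := by
      rw [div_le_one (by linarith)]; linarith
    nlinarith
  have hbad : ∀ j, P (⋂ l, X l ⁻¹' (S j)ᶜ) ≤ (1 - q)^n := by
    intro j
    have hprod : P (⋂ l, X l ⁻¹' (S j)ᶜ) = ∏ l, P (X l ⁻¹' (S j)ᶜ) := by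
      refine hiid.meas_iInter (fun l => ?_)
      exact ⟨(S j)ᶜ, (hSmeas j).compl, rfl⟩
    rw [hprod]
    calc ∏ l, P (X l ⁻¹' (S j)ᶜ) ≤ ∏ _l : Fin n, (1 - q) := by
          refine Finset.prod_le_prod' (fun l _ => ?_)
          have hcompl : P (X l ⁻¹' (S j)ᶜ) = 1 - P (X l ⁻¹' (S j)) := by
            rw [Set.preimage_compl]
            exact prob_compl_eq_one_sub ((hmeas l) (hSmeas j))
          rw [hcompl]
          exact tsub_le_tsub_left (hmass j l) 1
      _ = (1 - q)^n := by rw [Finset.prod_const, Finset.card_univ, Fintype.card_fin]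
  -- union bound
  have hunion : P Gᶜ ≤ k₀ * (1 - q)^n := by
    rw [hGc]
    calc P (⋃ j, ⋂ l, X l ⁻¹' (S j)ᶜ) ≤ ∑ j : Fin k₀, P (⋂ l, X l ⁻¹' (S j)ᶜ) :=
          measure_iUnion_fintype_le _ _
      _ ≤ ∑ _j : Fin k₀, (1 - q)^n := Finset.sum_le_sum (fun j _ => hbad j)
      _ = k₀ * (1 - q)^n := by
          rw [Finset.sum_const, Finset.card_univ, Fintype.card_fin, nsmul_eq_mul]
  -- numeric bound
  have hnum : (k₀ : ℝ≥0∞) * (1 - q)^n ≤ (1 / 10 : ℝ≥0∞) / 100 := by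
    have ht34 : c / (k:ℝ) * (3/4) ≤ 1 := by
      have hk1 : (1:ℝ) ≤ k := by exact_mod_cast hk
      have : c / k ≤ 1 := by
        rw [div_le_one (by linarith)]; linarith
      nlinarith
    have h1q : 1 - q = ENNReal.ofReal (1 - c / k * (3/4)) := by
      rw [hq, ENNReal.ofReal_sub _ (by positivity), ENNReal.ofReal_one]
    rw [h1q, ← ENNReal.ofReal_pow (by linarith),
      show ((k₀ : ℝ≥0∞)) = ENNReal.ofReal (k₀ : ℝ) by simp,
      ← ENNReal.ofReal_mul (by positivity)]
    have hreal := real_numeric k k₀ n hk hk₀k c hc hc1 hn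
    refine le_trans (ENNReal.ofReal_le_ofReal hreal) (le_of_eq ?_)
    rw [one_div, ENNReal.ofReal_inv_of_pos (by norm_num), ENNReal.ofReal_ofNat,
      one_div, div_eq_mul_inv, ← ENNReal.mul_inv (Or.inr (by norm_num)) (Or.inl (by norm_num))]
    norm_num
  have hPG : P G = 1 - P Gᶜ := by
    conv_lhs => rw [← compl_compl G]
    exact prob_compl_eq_one_sub hGmeas.compl
  rw [ge_iff_le, hPG]
  exact tsub_le_tsub_left (hunion.trans hnum) 1
end

section
/- Let c ∈ (0,1) and let C₃.₂ be a sufficiently large universal constant. Let k, d ≥ 1 be integers, Δ̄ > 0, Δ = C₃.₂·Δ̄, and let y_1,…,y_{k₀} ∈ ℝ^d (k₀ ≤ k) satisfy ‖y_r − y_s‖₂ ≥ Δ√d for all r ≠ s, with weights w_r ≤ 1/(ck) for all r. Then for every j ∈ [k₀] and every x ∈ ℝ^d with ‖x − y_j‖₂ ≤ 3.2·Δ√d/(200·C₃.₂), one has Σ_{r ≠ j} w_r·e^{-‖x − y_r‖₂²/(2Δ̄²)} ≤ 10³¹/(c·k·d^{15}·C₃.₂³⁰). -/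
open MeasureTheory Real

set_option maxHeartbeats 1000000

open MeasureTheory Real

lemma aux_num (C : ℝ) (hC : (10:ℝ)^4 ≤ C) (d : ℕ) (hd : 1 ≤ d) :
    Real.exp (-(C^2 * d) / 40) ≤ 10^31 / ((d:ℝ)^15 * C^30) := by
  have hC0 : (0:ℝ) < C := lt_of_lt_of_le (by norm_num) hC
  have hd0 : (1:ℝ) ≤ (d:ℝ) := by exact_mod_cast hd
  have hCsq : (10:ℝ)^8 ≤ C^2 := by nlinarith
  have h1 : Real.exp (-(C^2 * d) / 40) ≤ Real.exp (-(C^2/80)) * Real.exp (-(d:ℝ)) := by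
    rw [← Real.exp_add]
    apply Real.exp_le_exp.2
    have e1 : 0 ≤ C^2 * ((d:ℝ) - 1) := mul_nonneg (sq_nonneg C) (by linarith)
    have e2 : (10:ℝ)^8 * (d:ℝ) ≤ C^2 * (d:ℝ) :=
      mul_le_mul_of_nonneg_right hCsq (by linarith)
    nlinarith
  have h2 : Real.exp (-(C^2/80)) ≤ 1 / C^30 := by
    have hfact : ((Nat.factorial 30 : ℝ) * 80^30) ≤ C^30 := by
      have e1 : ((Nat.factorial 30 : ℝ) * 80^30) ≤ (10:ℝ)^120 := by
        norm_num [Nat.factorial]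
      have e2 : ((10:ℝ)^4)^30 ≤ C^30 := pow_le_pow_left₀ (by norm_num) hC 30
      calc ((Nat.factorial 30 : ℝ) * 80^30) ≤ (10:ℝ)^120 := e1
        _ = ((10:ℝ)^4)^30 := by norm_num
        _ ≤ C^30 := e2
    have hkey : C^30 ≤ Real.exp (C^2/80) := by
      have hp := Real.pow_div_factorial_le_exp (x := C^2/80) (by positivity) 30
      refine le_trans ?_ hp
      rw [le_div_iff₀ (by positivity)]
      have e3 : C^30 * (Nat.factorial 30:ℝ) ≤ C^30 * C^30 / 80^30 := by
        rw [le_div_iff₀ (by positivity)]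
        calc C^30 * (Nat.factorial 30:ℝ) * 80^30
            = C^30 * ((Nat.factorial 30:ℝ) * 80^30) := by ring
          _ ≤ C^30 * C^30 := mul_le_mul_of_nonneg_left hfact (by positivity)
      calc C^30 * (Nat.factorial 30:ℝ) ≤ C^30 * C^30 / 80^30 := e3
        _ = (C^2/80)^30 := by ring
    rw [Real.exp_neg, one_div]
    exact inv_anti₀ (by positivity) hkey
  have h3 : Real.exp (-(d:ℝ)) ≤ 10^31 / (d:ℝ)^15 := by
    have hp := Real.pow_div_factorial_le_exp (x := (d:ℝ)) (by positivity) 15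
    have hd15 : (d:ℝ)^15 ≤ Real.exp (d:ℝ) * (Nat.factorial 15:ℝ) :=
      (div_le_iff₀ (by positivity)).1 hp
    rw [le_div_iff₀ (by positivity)]
    calc Real.exp (-(d:ℝ)) * (d:ℝ)^15
        ≤ Real.exp (-(d:ℝ)) * (Real.exp (d:ℝ) * (Nat.factorial 15:ℝ)) :=
          mul_le_mul_of_nonneg_left hd15 (Real.exp_nonneg _)
      _ = (Real.exp (-(d:ℝ)) * Real.exp (d:ℝ)) * (Nat.factorial 15:ℝ) := by ring
      _ = (Nat.factorial 15:ℝ) := by rw [← Real.exp_add]; simp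
      _ ≤ 10^31 := by norm_num [Nat.factorial]
  calc Real.exp (-(C^2 * d) / 40) ≤ Real.exp (-(C^2/80)) * Real.exp (-(d:ℝ)) := h1
    _ ≤ (1 / C^30) * (10^31 / (d:ℝ)^15) :=
        mul_le_mul h2 h3 (Real.exp_nonneg _) (by positivity)
    _ = 10^31 / ((d:ℝ)^15 * C^30) := by
        rw [div_mul_div_comm, one_mul, mul_comm]

lemma aux_dist {d : ℕ} (z p : EuclideanSpace ℝ (Fin d)) (a : ℝ) (ha : 0 ≤ a)
    (h : ∀ i, |z i - p i| ≤ a) : dist z p ≤ a * Real.sqrt d := by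
  rw [EuclideanSpace.dist_eq]
  have h1 : ∑ i, dist (z i) (p i) ^ 2 ≤ ∑ _i : Fin d, a ^ 2 := by
    refine Finset.sum_le_sum fun i _ => ?_
    rw [Real.dist_eq]
    exact pow_le_pow_left₀ (abs_nonneg _) (h i) 2
  refine le_trans (Real.sqrt_le_sqrt h1) ?_
  rw [Finset.sum_const, Finset.card_univ, Fintype.card_fin, nsmul_eq_mul]
  rw [show (d : ℝ) * a ^ 2 = (a * Real.sqrt d) ^ 2 by
    rw [mul_pow, Real.sq_sqrt (Nat.cast_nonneg d)]; ring]
  exact le_of_eq (Real.sqrt_sq (by positivity))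


/-- For `c ∈ (0,1)` and a sufficiently large universal constant `C₃.₂`, with
`Δ = C₃.₂·Δ̄` and centers `y_r` at pairwise distance ≥ `Δ√d` and weights `w_r ≤ 1/(ck)`: for any
`j` and any `x` with `‖x − y_j‖ ≤ 3.2·Δ√d/(200·C₃.₂)`,
`Σ_{r ≠ j} w_r·e^(-‖x − y_r‖²/(2Δ̄²)) ≤ 10³¹/(c·k·d¹⁵·C₃.₂³⁰)`. -/
theorem far_centers_contribution_small :
    ∃ C₃₂₀ : ℝ, ∀ C₃₂ : ℝ, C₃₂₀ ≤ C₃₂ →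
      ∀ (c : ℝ), 0 < c → c < 1 →
        ∀ (k d k₀ : ℕ), 1 ≤ k → 1 ≤ d → 1 ≤ k₀ → k₀ ≤ k →
          ∀ (Δb : ℝ), 0 < Δb →
            ∀ (y : Fin k₀ → EuclideanSpace ℝ (Fin d)) (w : Fin k₀ → ℝ),
              (∀ r, 0 ≤ w r) → (∀ r, w r ≤ 1 / (c * k)) →
                (∀ r r' : Fin k₀, r ≠ r' → C₃₂ * Δb * Real.sqrt d ≤ dist (y r) (y r')) →
                  ∀ (j : Fin k₀) (x : EuclideanSpace ℝ (Fin d)),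
                    dist x (y j) ≤ 3.2 * (C₃₂ * Δb) * Real.sqrt d / (200 * C₃₂) →
                      ∑ r ∈ Finset.univ.erase j,
                          w r * Real.exp (-(dist x (y r)) ^ 2 / (2 * Δb ^ 2)) ≤
                        10 ^ 31 / (c * k * (d : ℝ) ^ 15 * C₃₂ ^ 30) := by
  refine ⟨(10:ℝ)^4, ?_⟩
  intro C₃₂ hCle c hc0 hc1 k d k₀ hk hd hk₀ hk₀k Δb hΔb y w hw0 hw1 hsep j x hx
  haveI : Nonempty (Fin d) := ⟨⟨0, hd⟩⟩
  have hC0 : (0:ℝ) < C₃₂ := lt_of_lt_of_le (by norm_num) hCle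
  have hC9 : (9:ℝ) ≤ C₃₂ := le_trans (by norm_num) hCle
  have hd0 : (0:ℝ) < (d:ℝ) := by exact_mod_cast hd
  have hsd : (0:ℝ) < Real.sqrt d := Real.sqrt_pos.2 hd0
  have hk0 : (0:ℝ) < (k:ℝ) := by exact_mod_cast hk
  set a : ℝ := C₃₂ * Δb / 3 with ha_def
  have ha0 : 0 < a := by positivity
  set b : ℝ := 1 / (10 * Δb^2) with hb_def
  have hb0 : 0 < b := by positivity
  have hG0 : ∀ z : EuclideanSpace ℝ (Fin d), 0 ≤ Real.exp (-b * ‖z - x‖ ^ 2) :=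
    fun z => Real.exp_nonneg _
  -- the distance from x to y j is small
  have hxj : dist x (y j) ≤ 0.016 * (Δb * Real.sqrt d) := by
    refine le_trans hx (le_of_eq ?_)
    field_simp
    ring
  -- distance from x to other centers is at least half the separation
  have hD : ∀ r : Fin k₀, r ≠ j → C₃₂ * Δb * Real.sqrt d / 2 ≤ dist x (y r) := by
    intro r hr
    have h1 := hsep j r (Ne.symm hr)
    have h2 : dist (y j) (y r) ≤ dist x (y j) + dist x (y r) := by
      rw [dist_comm x (y j)]
      exact dist_triangle _ _ _
    have h3 : (0:ℝ) < Δb * Real.sqrt d := by positivity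
    nlinarith
  -- integrability of the Gaussian
  have hgint : Integrable (fun v : EuclideanSpace ℝ (Fin d) => Real.exp (-b * ‖v‖ ^ 2)) := by
    have hc := (GaussianFourier.integrable_cexp_neg_mul_sq_norm_add
      (V := EuclideanSpace ℝ (Fin d)) (b := (b : ℂ)) (by simpa using hb0) 0
      (0 : EuclideanSpace ℝ (Fin d))).norm
    refine hc.congr (Filter.Eventually.of_forall fun v => ?_)
    simp [Complex.norm_exp]
    left
    norm_cast
  have hGint : Integrable (fun z : EuclideanSpace ℝ (Fin d) => Real.exp (-b * ‖z - x‖ ^ 2)) :=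
    hgint.comp_sub_right x
  -- value of the Gaussian integral
  have hGval : ∫ z : EuclideanSpace ℝ (Fin d), Real.exp (-b * ‖z - x‖ ^ 2)
      = (π / b) ^ ((d : ℝ) / 2) := by
    have h1 : ∫ z : EuclideanSpace ℝ (Fin d), Real.exp (-b * ‖z - x‖ ^ 2)
        = ∫ z : EuclideanSpace ℝ (Fin d), Real.exp (-b * ‖z‖ ^ 2) :=
      integral_sub_right_eq_self (fun v : EuclideanSpace ℝ (Fin d) => Real.exp (-b * ‖v‖ ^ 2)) x
    rw [h1, GaussianFourier.integral_rexp_neg_mul_sq_norm hb0]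
    norm_num [finrank_euclideanSpace_fin]
  have hGbound : ∫ z : EuclideanSpace ℝ (Fin d), Real.exp (-b * ‖z - x‖ ^ 2) ≤ (6 * Δb) ^ d := by
    rw [hGval]
    have h6 : (0:ℝ) ≤ 6 * Δb := by positivity
    have h2 : π / b ≤ (6 * Δb) ^ 2 := by
      have hπb : π / b = π * (10 * Δb ^ 2) := by
        rw [hb_def]; field_simp
      rw [hπb]
      nlinarith [Real.pi_lt_d2, sq_nonneg Δb]
    calc (π / b) ^ ((d:ℝ)/2) ≤ ((6 * Δb) ^ 2) ^ ((d:ℝ)/2) :=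
          Real.rpow_le_rpow (by positivity) h2 (by positivity)
      _ = (6 * Δb) ^ d := by
          rw [← Real.rpow_natCast (6*Δb) 2, ← Real.rpow_mul h6,
            show ((2:ℕ):ℝ) * ((d:ℝ)/2) = ((d:ℕ):ℝ) by push_cast; ring,
            Real.rpow_natCast]
  -- the cubes around the centers
  set Q : Fin k₀ → Set (EuclideanSpace ℝ (Fin d)) := fun r =>
    (MeasurableEquiv.toLp 2 (Fin d → ℝ)).symm ⁻¹'
      (Set.univ.pi fun i => Set.Icc (y r i - a) (y r i + a)) with hQ_def
  have hQmem : ∀ (r : Fin k₀) (z : EuclideanSpace ℝ (Fin d)),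
      z ∈ Q r ↔ ∀ i, |z i - y r i| ≤ a := by
    intro r z
    simp only [hQ_def, Set.mem_preimage, Set.mem_pi, Set.mem_univ, forall_true_left, Set.mem_Icc,
      MeasurableEquiv.toLp_symm_apply]
    constructor
    · intro h i
      rw [abs_le]
      constructor <;> linarith [(h i).1, (h i).2]
    · intro h i
      have := abs_le.1 (h i)
      constructor <;> linarith [this.1, this.2]
  have hQmeas : ∀ r, MeasurableSet (Q r) := fun r =>
    (MeasurableEquiv.measurable _) (MeasurableSet.univ_pi fun _ => measurableSet_Icc)
  have hQvol : ∀ r, volume (Q r) = (ENNReal.ofReal (2 * a)) ^ d := by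
    intro r
    rw [hQ_def]
    rw [MeasurePreserving.measure_preimage
      (EuclideanSpace.volume_preserving_symm_measurableEquiv_toLp (Fin d))
      ((MeasurableSet.univ_pi fun i => measurableSet_Icc).nullMeasurableSet)]
    rw [volume_pi_pi]
    have h : ∀ i : Fin d, volume (Set.Icc (y r i - a) (y r i + a)) = ENNReal.ofReal (2 * a) := by
      intro i
      rw [Real.volume_Icc]
      congr 1
      ring
    rw [Finset.prod_congr rfl fun i _ => h i, Finset.prod_const, Finset.card_univ,
      Fintype.card_fin]
  have hQvolR : ∀ r, (volume (Q r)).toReal = (2 * a) ^ d := by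
    intro r
    rw [hQvol r, ENNReal.toReal_pow, ENNReal.toReal_ofReal (by positivity)]
  -- cubes have small diameter around their center
  have hQdist : ∀ (r : Fin k₀) (z : EuclideanSpace ℝ (Fin d)), z ∈ Q r →
      dist z (y r) ≤ a * Real.sqrt d :=
    fun r z hz => aux_dist z (y r) a ha0.le ((hQmem r z).1 hz)
  -- cubes are pairwise disjoint
  have hQdisj : Set.Pairwise ↑(Finset.univ.erase j) (Function.onFun Disjoint Q) := by
    intro r hr r' hr' hne
    rw [Function.onFun, Set.disjoint_left]
    intro z hzr hzr'
    have h1 := hQdist r z hzr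
    have h2 := hQdist r' z hzr'
    have h3 := hsep r r' hne
    have h4 : dist (y r) (y r') ≤ 2 * (a * Real.sqrt d) := by
      calc dist (y r) (y r') ≤ dist (y r) z + dist z (y r') := dist_triangle _ _ _
        _ ≤ a * Real.sqrt d + a * Real.sqrt d := by
            rw [dist_comm (y r) z]
            exact add_le_add h1 h2
        _ = 2 * (a * Real.sqrt d) := by ring
    have h5 : (0:ℝ) < C₃₂ * Δb * Real.sqrt d := by positivity
    rw [ha_def] at h4
    nlinarith
  -- pointwise lower bound for G on each cube
  have hpoint : ∀ r ∈ Finset.univ.erase j, ∀ z ∈ Q r,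
      Real.exp ((C₃₂^2 * d) / 40) * Real.exp (-(dist x (y r)) ^ 2 / (2 * Δb ^ 2)) ≤ Real.exp (-b * ‖z - x‖ ^ 2) := by
    intro r hr z hz
    have hrj : r ≠ j := Finset.ne_of_mem_erase hr
    have hDr := hD r hrj
    have hDr0 : 0 ≤ dist x (y r) := dist_nonneg
    have h1 := hQdist r z hz
    have h2 : dist z x ≤ a * Real.sqrt d + dist x (y r) := by
      calc dist z x ≤ dist z (y r) + dist (y r) x := dist_triangle _ _ _
        _ ≤ a * Real.sqrt d + dist x (y r) := by
            rw [dist_comm (y r) x]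
            exact add_le_add h1 le_rfl
    have hsq : Real.sqrt d ^ 2 = (d:ℝ) := Real.sq_sqrt hd0.le
    have hDsq : C₃₂^2 * Δb^2 * (d:ℝ) / 4 ≤ (dist x (y r))^2 := by
      have := pow_le_pow_left₀ (by positivity) hDr 2
      calc C₃₂^2 * Δb^2 * (d:ℝ) / 4 = (C₃₂ * Δb * Real.sqrt d / 2)^2 := by
            rw [div_pow, mul_pow, mul_pow, hsq]; ring
        _ ≤ (dist x (y r))^2 := this
    have ha23 : a * Real.sqrt d ≤ (2/3) * dist x (y r) := by
      rw [ha_def]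
      calc C₃₂ * Δb / 3 * Real.sqrt d = (2/3) * (C₃₂ * Δb * Real.sqrt d / 2) := by ring
        _ ≤ (2/3) * dist x (y r) := by linarith
    have hzx : dist z x ≤ (5/3) * dist x (y r) := by linarith
    have hzx2 : (dist z x)^2 ≤ (25/9) * (dist x (y r))^2 := by
      calc (dist z x)^2 ≤ ((5/3) * dist x (y r))^2 :=
            pow_le_pow_left₀ dist_nonneg hzx 2
        _ = (25/9) * (dist x (y r))^2 := by ring
    have hP : (0:ℝ) ≤ C₃₂^2 * Δb^2 * (d:ℝ) := by positivity
    have hnum : 0 ≤ 20*(dist x (y r))^2 - 4*(dist z x)^2 - C₃₂^2 * Δb^2 * (d:ℝ) := by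
      linarith only [hDsq, hzx2, hP]
    have hnorm : ‖z - x‖ = dist z x := by rw [dist_eq_norm]
    rw [← Real.exp_add]
    apply Real.exp_le_exp.2
    rw [hnorm, hb_def]
    have hΔbne : Δb ≠ 0 := ne_of_gt hΔb
    rw [← sub_nonneg]
    have heq : -(1/(10*Δb^2)) * (dist z x)^2 -
        ((C₃₂^2 * ↑d) / 40 + -(dist x (y r)) ^ 2 / (2 * Δb ^ 2)) =
        (20*(dist x (y r))^2 - 4*(dist z x)^2 - C₃₂^2 * Δb^2 * (d:ℝ)) / (40 * Δb^2) := by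
      field_simp
      ring
    rw [heq]
    exact div_nonneg hnum (by positivity)
  -- per-cube integral lower bound
  have hper : ∀ r ∈ Finset.univ.erase j,
      Real.exp ((C₃₂^2 * d) / 40) * Real.exp (-(dist x (y r)) ^ 2 / (2 * Δb ^ 2)) * (2*a)^d
        ≤ ∫ z in Q r, Real.exp (-b * ‖z - x‖ ^ 2) := by
    intro r hr
    have hfin : volume (Q r) < ⊤ := by
      rw [hQvol r]
      exact ENNReal.pow_lt_top ENNReal.ofReal_lt_top
    calc Real.exp ((C₃₂^2 * d) / 40) * Real.exp (-(dist x (y r)) ^ 2 / (2 * Δb ^ 2)) * (2*a)^d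
        = (volume (Q r)).toReal •
          (Real.exp ((C₃₂^2 * d) / 40) * Real.exp (-(dist x (y r)) ^ 2 / (2 * Δb ^ 2))) := by
          rw [hQvolR r, smul_eq_mul]; ring
      _ = ∫ _z in Q r,
          (Real.exp ((C₃₂^2 * d) / 40) * Real.exp (-(dist x (y r)) ^ 2 / (2 * Δb ^ 2))) :=
          (setIntegral_const _).symm
      _ ≤ ∫ z in Q r, Real.exp (-b * ‖z - x‖ ^ 2) :=
          setIntegral_mono_on (integrableOn_const hfin.ne) hGint.integrableOn
            (hQmeas r) (hpoint r hr)
  -- summing over the cubes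
  have hsum2 : ∑ r ∈ Finset.univ.erase j,
      Real.exp ((C₃₂^2 * d) / 40) * Real.exp (-(dist x (y r)) ^ 2 / (2 * Δb ^ 2)) * (2*a)^d
        ≤ (6*Δb)^d := by
    calc ∑ r ∈ Finset.univ.erase j,
        Real.exp ((C₃₂^2 * d) / 40) * Real.exp (-(dist x (y r)) ^ 2 / (2 * Δb ^ 2)) * (2*a)^d
        ≤ ∑ r ∈ Finset.univ.erase j, ∫ z in Q r, Real.exp (-b * ‖z - x‖ ^ 2) := Finset.sum_le_sum hper
      _ = ∫ z in ⋃ r ∈ Finset.univ.erase j, Q r, Real.exp (-b * ‖z - x‖ ^ 2) :=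
          (integral_biUnion_finset _ (fun i _ => hQmeas i) hQdisj
            (fun i _ => hGint.integrableOn)).symm
      _ ≤ ∫ z : EuclideanSpace ℝ (Fin d), Real.exp (-b * ‖z - x‖ ^ 2) :=
          setIntegral_le_integral hGint (Filter.Eventually.of_forall hG0)
      _ ≤ (6*Δb)^d := hGbound
  have h2a6 : (6*Δb)^d ≤ (2*a)^d := by
    apply pow_le_pow_left₀ (by positivity)
    rw [ha_def]
    nlinarith
  -- the unweighted sum of exponentials is small
  have hEsum : ∑ r ∈ Finset.univ.erase j, Real.exp (-(dist x (y r)) ^ 2 / (2 * Δb ^ 2))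
      ≤ Real.exp (-(C₃₂^2 * d) / 40) := by
    have hP : (0:ℝ) < (2*a)^d := by positivity
    have h1 : Real.exp ((C₃₂^2 * d) / 40) *
        (∑ r ∈ Finset.univ.erase j, Real.exp (-(dist x (y r)) ^ 2 / (2 * Δb ^ 2))) * (2*a)^d
        ≤ (2*a)^d := by
      have h0 : Real.exp ((C₃₂^2 * d) / 40) *
          (∑ r ∈ Finset.univ.erase j, Real.exp (-(dist x (y r)) ^ 2 / (2 * Δb ^ 2))) * (2*a)^d
          = ∑ r ∈ Finset.univ.erase j,
            Real.exp ((C₃₂^2 * d) / 40) * Real.exp (-(dist x (y r)) ^ 2 / (2 * Δb ^ 2)) * (2*a)^d := by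
        rw [Finset.mul_sum, Finset.sum_mul]
      rw [h0]
      exact hsum2.trans h2a6
    have h2 : Real.exp ((C₃₂^2 * d) / 40) *
        (∑ r ∈ Finset.univ.erase j, Real.exp (-(dist x (y r)) ^ 2 / (2 * Δb ^ 2))) ≤ 1 := by
      have := le_of_mul_le_mul_right (by linarith [h1] :
        Real.exp ((C₃₂^2 * d) / 40) *
          (∑ r ∈ Finset.univ.erase j, Real.exp (-(dist x (y r)) ^ 2 / (2 * Δb ^ 2))) * (2*a)^d
          ≤ 1 * (2*a)^d) hP
      exact this
    rw [show -(C₃₂^2 * (d:ℝ)) / 40 = -((C₃₂^2 * (d:ℝ)) / 40) by ring, Real.exp_neg]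
    have h3 := mul_le_mul_of_nonneg_left h2 (inv_nonneg.2 (Real.exp_nonneg ((C₃₂^2 * d) / 40)))
    rwa [← mul_assoc, inv_mul_cancel₀ (Real.exp_pos _).ne', one_mul, mul_one] at h3
  -- conclusion
  calc ∑ r ∈ Finset.univ.erase j, w r * Real.exp (-(dist x (y r)) ^ 2 / (2 * Δb ^ 2))
      ≤ ∑ r ∈ Finset.univ.erase j, (1/(c*k)) * Real.exp (-(dist x (y r)) ^ 2 / (2 * Δb ^ 2)) :=
        Finset.sum_le_sum fun r _ => mul_le_mul_of_nonneg_right (hw1 r) (Real.exp_nonneg _)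
    _ = (1/(c*(k:ℝ))) * ∑ r ∈ Finset.univ.erase j, Real.exp (-(dist x (y r)) ^ 2 / (2 * Δb ^ 2)) :=
        (Finset.mul_sum _ _ _).symm
    _ ≤ (1/(c*(k:ℝ))) * Real.exp (-(C₃₂^2 * d) / 40) :=
        mul_le_mul_of_nonneg_left hEsum (by positivity)
    _ ≤ (1/(c*(k:ℝ))) * (10^31 / ((d:ℝ)^15 * C₃₂^30)) :=
        mul_le_mul_of_nonneg_left (aux_num C₃₂ hCle d hd) (by positivity)
    _ = 10 ^ 31 / (c * k * (d : ℝ) ^ 15 * C₃₂ ^ 30) := by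
        rw [div_mul_div_comm, one_mul]
        congr 1
        ring
end
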